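/- Let E be a directed graph whose only hereditary and saturated subsets of E^0 are ∅ and E^0, and suppose α is a closed path in E with no exit. Then every closed path β in E has the same vertex set as α, i.e., β^0 = α^0. -/

import Mathlib

/-- A directed graph `E = (E⁰, E¹, r, s)`: `V` is the vertex set `E⁰`, `Edg` is the
edge set `E¹`, and `s`, `r` give the source and range of each edge. -/
structure DGraph (V : Type*) (Edg : Type*) where
  s : Edg → V
  r : Edg → V

namespace DGraph

variable {V Edg : Type*}

/-- There is an edge from `v` to `w`. -/
def Adj (G : DGraph V Edg) (v w : V) : Prop := ∃ e, G.s e = v ∧ G.r e = w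

/-- There is a path (possibly of length zero, i.e. a vertex) from `v` to `w`. -/
def Reaches (G : DGraph V Edg) : V → V → Prop := Relation.ReflTransGen G.Adj

/-- A subset `X ⊆ E⁰` is hereditary if `r(e) ∈ X` whenever `s(e) ∈ X`. -/
def Hereditary (G : DGraph V Edg) (X : Set V) : Prop := ∀ e, G.s e ∈ X → G.r e ∈ X

/-- A vertex is a finite emitter if `s⁻¹(v)` is finite and nonempty. -/
def FiniteEmitter (G : DGraph V Edg) (v : V) : Prop :=
  {e | G.s e = v}.Finite ∧ {e | G.s e = v}.Nonempty

/-- A subset `X ⊆ E⁰` is saturated if every finite emitter `v` with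
`r(s⁻¹(v)) ⊆ X` lies in `X`. -/
def Saturated (G : DGraph V Edg) (X : Set V) : Prop :=
  ∀ v, FiniteEmitter G v → (∀ e, G.s e = v → G.r e ∈ X) → v ∈ X

/-- The hereditary saturated closure of `X`: the smallest hereditary and saturated
subset of `E⁰` containing `X`. -/
def satClosure (G : DGraph V Edg) (X : Set V) : Set V :=
  ⋂₀ {Y | Hereditary G Y ∧ Saturated G Y ∧ X ⊆ Y}

/-- The consecutive edges of a path match up: `r(eᵢ) = s(eᵢ₊₁)`. -/
def IsChain (G : DGraph V Edg) (p : List Edg) : Prop :=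
  List.Chain' (fun e f => G.r e = G.s f) p

/-- `p` is a closed path (of length ≥ 1) based at `v`. -/
def IsClosedPathAt (G : DGraph V Edg) (p : List Edg) (v : V) : Prop :=
  ∃ hne : p ≠ [], IsChain G p ∧ G.s (p.head hne) = v ∧ G.r (p.getLast hne) = v

/-- `p` is a closed path (of length ≥ 1). -/
def IsClosedPath (G : DGraph V Edg) (p : List Edg) : Prop := ∃ v, IsClosedPathAt G p v

/-- The vertex set `α⁰ = {s(e₁), …, s(eₙ)}` of a path. -/
def pathVerts (G : DGraph V Edg) (p : List Edg) : Set V := {w | ∃ e ∈ p, G.s e = w}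

/-- An exit of a closed path `e₁⋯eₙ` is an edge `f` with `s(f) = s(eᵢ)` and
`f ≠ eᵢ` for some `i`. -/
def IsExitOf (G : DGraph V Edg) (f : Edg) (p : List Edg) : Prop :=
  ∃ e ∈ p, G.s f = G.s e ∧ f ≠ e

/-- `p` is a simple closed path based at `v`: a closed path whose sources are
pairwise distinct. -/
def IsSimpleClosedPathAt (G : DGraph V Edg) (p : List Edg) (v : V) : Prop :=
  IsClosedPathAt G p v ∧ (p.map G.s).Nodup

end DGraph


namespace DGraph

variable {V Edg : Type*}

/-- Along a chain, the source of the head reaches the source of any member. -/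
lemma reaches_src_of_mem (G : DGraph V Edg) :
    ∀ (p : List Edg), IsChain G p → ∀ h : p ≠ [], ∀ e ∈ p,
      G.Reaches (G.s (p.head h)) (G.s e) := by
  intro p
  induction p with
  | nil => intro _ h; exact absurd rfl h
  | cons f q ih =>
    intro hc h e he
    rcases List.mem_cons.mp he with rfl | he
    · exact Relation.ReflTransGen.refl
    · have hq : q ≠ [] := List.ne_nil_of_mem he
      obtain ⟨h1, h2⟩ := List.isChain_cons.mp hc
      have hr : G.r f = G.s (q.head hq) := h1 _ (List.head?_eq_head hq)
      have h3 : G.Reaches (G.s (q.head hq)) (G.s e) := ih h2 hq e he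
      exact Relation.ReflTransGen.head ⟨f, rfl, hr⟩ h3

/-- Along a chain, the source of any member reaches the range of the last edge. -/
lemma reaches_r_getLast_of_mem (G : DGraph V Edg) :
    ∀ (p : List Edg), IsChain G p → ∀ h : p ≠ [], ∀ e ∈ p,
      G.Reaches (G.s e) (G.r (p.getLast h)) := by
  intro p
  induction p with
  | nil => intro _ h; exact absurd rfl h
  | cons f q ih =>
    intro hc h e he
    rcases eq_or_ne q [] with rfl | hq
    · rcases List.mem_cons.mp he with rfl | he
      · exact Relation.ReflTransGen.single ⟨e, rfl, rfl⟩
      · exact absurd he List.not_mem_nil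
    · obtain ⟨h1, h2⟩ := List.isChain_cons.mp hc
      have hL : (f :: q).getLast h = q.getLast hq := List.getLast_cons hq
      rw [hL]
      rcases List.mem_cons.mp he with rfl | he
      · have hr : G.r e = G.s (q.head hq) := h1 _ (List.head?_eq_head hq)
        have h3 : G.Reaches (G.s (q.head hq)) (G.r (q.getLast hq)) :=
          ih h2 hq _ (List.head_mem hq)
        exact Relation.ReflTransGen.head ⟨e, rfl, hr⟩ h3
      · exact ih h2 hq e he

/-- Along a chain, the range of any member is either the range of the last edge
or the source of some member. -/
lemma r_eq_or_src (G : DGraph V Edg) :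
    ∀ (p : List Edg), IsChain G p → ∀ h : p ≠ [], ∀ e ∈ p,
      G.r e = G.r (p.getLast h) ∨ ∃ f ∈ p, G.s f = G.r e := by
  intro p
  induction p with
  | nil => intro _ h; exact absurd rfl h
  | cons f q ih =>
    intro hc h e he
    rcases eq_or_ne q [] with rfl | hq
    · rcases List.mem_cons.mp he with rfl | he
      · exact Or.inl rfl
      · exact absurd he List.not_mem_nil
    · obtain ⟨h1, h2⟩ := List.isChain_cons.mp hc
      have hL : (f :: q).getLast h = q.getLast hq := List.getLast_cons hq
      rw [hL]
      rcases List.mem_cons.mp he with rfl | he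
      · have hr : G.r e = G.s (q.head hq) := h1 _ (List.head?_eq_head hq)
        exact Or.inr ⟨q.head hq, List.mem_cons_of_mem _ (List.head_mem hq), hr.symm⟩
      · rcases ih h2 hq e he with h3 | ⟨g, hg, hsg⟩
        · exact Or.inl h3
        · exact Or.inr ⟨g, List.mem_cons_of_mem _ hg, hsg⟩

/-- In a closed path, the range of every edge is a vertex of the path. -/
lemma closed_r_mem {G : DGraph V Edg} {p : List Edg} {v : V}
    (hp : IsClosedPathAt G p v) : ∀ e ∈ p, G.r e ∈ pathVerts G p := by
  obtain ⟨hne, hc, hs, hr⟩ := hp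
  intro e he
  rcases r_eq_or_src G p hc hne e he with h | ⟨f, hf, hsf⟩
  · exact ⟨p.head hne, List.head_mem hne, by rw [hs, ← hr, ← h]⟩
  · exact ⟨f, hf, hsf⟩

/-- Vertices of a closed path mutually reach one another. -/
lemma closed_reaches {G : DGraph V Edg} {p : List Edg} {v : V}
    (hp : IsClosedPathAt G p v) :
    ∀ a ∈ pathVerts G p, ∀ b ∈ pathVerts G p, G.Reaches a b := by
  obtain ⟨hne, hc, hs, hr⟩ := hp
  rintro a ⟨e₁, he₁, rfl⟩ b ⟨e₂, he₂, rfl⟩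
  have h1 : G.Reaches (G.s e₁) (G.r (p.getLast hne)) :=
    reaches_r_getLast_of_mem G p hc hne e₁ he₁
  have h2 : G.Reaches (G.s (p.head hne)) (G.s e₂) :=
    reaches_src_of_mem G p hc hne e₂ he₂
  rw [hr, ← hs] at h1
  exact h1.trans h2

/-- A forward-closed set absorbs everything reachable from it. -/
lemma mem_of_reaches {G : DGraph V Edg} {Y : Set V}
    (hY : ∀ e, G.s e ∈ Y → G.r e ∈ Y) {u a : V} (hu : u ∈ Y)
    (h : G.Reaches u a) : a ∈ Y := by
  induction h with
  | refl => exact hu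
  | tail _ hadj ih =>
    obtain ⟨e, hs, hr⟩ := hadj
    exact hr ▸ hY e (hs ▸ ih)

/-- When the only hereditary saturated sets are trivial, every vertex reaches
the vertex set of any closed path. -/
lemma reaches_closed_path {G : DGraph V Edg}
    (htriv : ∀ X : Set V, G.Hereditary X → G.Saturated X → X = ∅ ∨ X = Set.univ)
    {p : List Edg} {v : V} (hp : IsClosedPathAt G p v) :
    ∀ u, ∃ w ∈ pathVerts G p, G.Reaches u w := by
  set X : Set V := {u | ∀ w ∈ pathVerts G p, ¬ G.Reaches u w} with hX
  have hher : G.Hereditary X := by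
    intro e hs w hw hr
    exact hs w hw (Relation.ReflTransGen.head ⟨e, rfl, rfl⟩ hr)
  have hsat : G.Saturated X := by
    intro u _ hall w hw hr
    rcases Relation.ReflTransGen.cases_head hr with rfl | ⟨c, hadj, hr'⟩
    · obtain ⟨e, he, hse⟩ := hw
      exact hall e hse (G.r e) (closed_r_mem ⟨hp.1, hp.2⟩ e he) Relation.ReflTransGen.refl
    · obtain ⟨e, hs, hrr⟩ := hadj
      exact hall e hs w hw (hrr ▸ hr')
  rcases htriv X hher hsat with h | h
  · intro u
    by_contra hcon
    push_neg at hcon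
    have hu : u ∈ X := fun w hw => hcon w hw
    rw [h] at hu
    exact hu
  · exfalso
    have hv : v ∈ X := h ▸ Set.mem_univ v
    obtain ⟨hne, _, hs, _⟩ := hp
    exact hv v ⟨p.head hne, List.head_mem hne, hs⟩ Relation.ReflTransGen.refl

end DGraph

/-- if the only hereditary and saturated subsets of `E⁰` are `∅` and
`E⁰`, and `α` is a closed path with no exit, then every closed path `β` has the
same vertex set as `α`. -/
theorem stmt4 {V Edg : Type*} (G : DGraph V Edg)
    (htriv : ∀ X : Set V, G.Hereditary X → G.Saturated X → X = ∅ ∨ X = Set.univ)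
    (α : List Edg) (hα : G.IsClosedPath α) (hnoexit : ∀ f, ¬ G.IsExitOf f α)
    (β : List Edg) (hβ : G.IsClosedPath β) :
    G.pathVerts β = G.pathVerts α :=  by
  obtain ⟨v, hαv⟩ := hα
  obtain ⟨u, hβu⟩ := hβ
  -- uniqueness of outgoing edges at vertices of α
  have huniq : ∀ e ∈ α, ∀ f, G.s f = G.s e → f = e := by
    intro e he f hf
    by_contra hne
    exact hnoexit f ⟨e, he, hf, hne⟩
  -- α⁰ is forward-closed
  have hαher : ∀ e, G.s e ∈ G.pathVerts α → G.r e ∈ G.pathVerts α := by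
    rintro e ⟨e', he', hse⟩
    have : e = e' := huniq e' he' e hse.symm
    subst this
    exact DGraph.closed_r_mem hαv e he'
  -- v ∈ α⁰
  have hvα : v ∈ G.pathVerts α := by
    obtain ⟨hne, _, hs, _⟩ := hαv
    exact ⟨α.head hne, List.head_mem hne, hs⟩
  -- find w ∈ β⁰ reachable from v; then w ∈ α⁰ too
  obtain ⟨w, hwβ, hreach⟩ := DGraph.reaches_closed_path htriv hβu v
  have hwα : w ∈ G.pathVerts α := DGraph.mem_of_reaches hαher hvα hreach
  -- β⁰ ⊆ α⁰
  have hsub : G.pathVerts β ⊆ G.pathVerts α := fun b hb =>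
    DGraph.mem_of_reaches hαher hwα (DGraph.closed_reaches hβu w hwβ b hb)
  -- β⁰ is forward-closed
  have hβher : ∀ e, G.s e ∈ G.pathVerts β → G.r e ∈ G.pathVerts β := by
    rintro e ⟨f, hf, hsf⟩
    have hfα : G.s f ∈ G.pathVerts α := hsub ⟨f, hf, rfl⟩
    obtain ⟨a, ha, hsa⟩ := hfα
    have hfa : f = a := huniq a ha f hsa.symm
    have hea : e = a := huniq a ha e (by rw [← hsf, hsa])
    have : e = f := by rw [hea, hfa]
    subst this
    rw [← hsf] at *
    exact DGraph.closed_r_mem hβu e hf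
  have hsup : G.pathVerts α ⊆ G.pathVerts β := fun a ha =>
    DGraph.mem_of_reaches hβher hwβ (DGraph.closed_reaches hαv w hwα a ha)
  exact Set.Subset.antisymm hsub hsup
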